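/- Let a_n > 0, r_n positive integers, v_n the continued radical approximants, and f_k the denesting functions. If the series S = ∑_{n=1}^∞ a_{n+1}^{1/r_{n+1}} / ∏_{i=1}^n (r_i · f_{i-1}(v_n)^{r_i - 1}) converges, then the sequence v_n converges. -/

import Mathlib

/-- `rad a r n i = (a i + (a (i+1) + ⋯ + (a n) ^ (1/r n)) ^ (1/r (i+1))) ^ (1/r i)`;
the `n`-th approximant `v n` of the continued radical is `rad a r n 1`. -/
noncomputable def rad (a : ℕ → ℝ) (r : ℕ → ℕ) (n : ℕ) : ℕ → ℝ
  | i => if _ : i ≤ n then (a i + rad a r n (i + 1)) ^ ((r i : ℝ)⁻¹) else 0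
termination_by i => n + 1 - i
decreasing_by omega

/-- The denesting functions: `den a r 0 y = y`, `den a r k y = (den a r (k-1) y) ^ (r k) - a k`. -/
noncomputable def den (a : ℕ → ℝ) (r : ℕ → ℕ) : ℕ → ℝ → ℝ
  | 0, y => y
  | k + 1, y => (den a r k y) ^ (r (k + 1)) - a (k + 1)

theorem rad_nonneg (a : ℕ → ℝ) (r : ℕ → ℕ) (ha : ∀ n, 1 ≤ n → 0 < a n) (n : ℕ) :
    ∀ i, 1 ≤ i → 0 ≤ rad a r n i
  | i, hi => by
    rw [rad]
    split
    · exact Real.rpow_nonneg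
        (by have h1 := rad_nonneg a r ha n (i + 1) (by omega); have h2 := ha i hi; linarith) _
    · exact le_refl 0
termination_by i => n + 1 - i
decreasing_by omega

theorem rad_pos (a : ℕ → ℝ) (r : ℕ → ℕ) (ha : ∀ n, 1 ≤ n → 0 < a n) (n i : ℕ)
    (hi : 1 ≤ i) (hin : i ≤ n) : 0 < rad a r n i := by
  rw [rad, dif_pos hin]
  exact Real.rpow_pos_of_pos
    (by have h1 := rad_nonneg a r ha n (i + 1) (by omega); have h2 := ha i hi; linarith) _

theorem rad_mono (a : ℕ → ℝ) (r : ℕ → ℕ) (ha : ∀ n, 1 ≤ n → 0 < a n) (n : ℕ) :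
    ∀ i, 1 ≤ i → rad a r n i ≤ rad a r (n + 1) i
  | i, hi => by
    by_cases h : i ≤ n
    · conv_lhs => rw [rad]
      conv_rhs => rw [rad]
      rw [dif_pos h, dif_pos (by omega : i ≤ n + 1)]
      have h1 := rad_mono a r ha n (i + 1) (by omega)
      have h2 := rad_nonneg a r ha n (i + 1) (by omega)
      have h3 := ha i hi
      exact Real.rpow_le_rpow (by linarith) (by linarith) (by positivity)
    · have hz : rad a r n i = 0 := by rw [rad, dif_neg h]
      rw [hz]
      exact rad_nonneg a r ha (n + 1) i hi
termination_by i => n + 1 - i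
decreasing_by omega

theorem den_eq_rad (a : ℕ → ℝ) (r : ℕ → ℕ) (ha : ∀ n, 1 ≤ n → 0 < a n) (hr : ∀ n, 1 ≤ r n)
    (n : ℕ) : ∀ k, k ≤ n → den a r k (rad a r n 1) = rad a r n (k + 1) := by
  intro k
  induction k with
  | zero => intro _; rfl
  | succ k ih =>
    intro hk
    rw [den, ih (by omega)]
    have hbase : 0 ≤ a (k + 1) + rad a r n (k + 2) := by
      have h1 := rad_nonneg a r ha n (k + 2) (by omega)
      have h2 := ha (k + 1) (by omega)
      linarith
    rw [show rad a r n (k + 1) = (a (k + 1) + rad a r n (k + 2)) ^ ((r (k + 1) : ℝ)⁻¹) by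
      rw [rad, dif_pos (by omega : k + 1 ≤ n)]]
    rw [Real.rpow_inv_natCast_pow hbase (by have := hr (k + 1); omega)]
    ring

theorem pow_sub_pow_ge {x y : ℝ} (hx : 0 ≤ x) (hxy : x ≤ y) (m : ℕ) :
    (m : ℝ) * x ^ (m - 1) * (y - x) ≤ y ^ m - x ^ m := by
  have h := geom_sum₂_mul y x m
  rw [← h]
  have hsum : (m : ℝ) * x ^ (m - 1) ≤ ∑ i ∈ Finset.range m, y ^ i * x ^ (m - 1 - i) := by
    calc (m : ℝ) * x ^ (m - 1) = ∑ _i ∈ Finset.range m, x ^ (m - 1) := by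
          rw [Finset.sum_const, Finset.card_range, nsmul_eq_mul]
      _ ≤ _ := by
          apply Finset.sum_le_sum
          intro i hi
          rw [Finset.mem_range] at hi
          calc x ^ (m - 1) = x ^ i * x ^ (m - 1 - i) := by
                rw [← pow_add]; congr 1; omega
            _ ≤ y ^ i * x ^ (m - 1 - i) := by
                exact mul_le_mul_of_nonneg_right (pow_le_pow_left₀ hx hxy i) (by positivity)
  exact mul_le_mul_of_nonneg_right hsum (by linarith)

theorem key (a : ℕ → ℝ) (r : ℕ → ℕ) (ha : ∀ n, 1 ≤ n → 0 < a n) (hr : ∀ n, 1 ≤ r n)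
    (n : ℕ) : ∀ k, k ≤ n →
    (∏ i ∈ Finset.Icc 1 k, (r i : ℝ) * (den a r (i - 1) (rad a r n 1)) ^ (r i - 1)) *
      (rad a r (n + 1) 1 - rad a r n 1)
    ≤ den a r k (rad a r (n + 1) 1) - den a r k (rad a r n 1) := by
  intro k
  induction k with
  | zero => intro _; simp [den]
  | succ k ih =>
    intro hk
    have ih' := ih (by omega)
    have hx : den a r k (rad a r n 1) = rad a r n (k + 1) := den_eq_rad a r ha hr n k (by omega)
    have hy : den a r k (rad a r (n + 1) 1) = rad a r (n + 1) (k + 1) :=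
      den_eq_rad a r ha hr (n + 1) k (by omega)
    have hxpos : 0 < rad a r n (k + 1) := rad_pos a r ha n (k + 1) (by omega) (by omega)
    have hxy : rad a r n (k + 1) ≤ rad a r (n + 1) (k + 1) := rad_mono a r ha n (k + 1) (by omega)
    have hpow := pow_sub_pow_ge hxpos.le hxy (r (k + 1))
    rw [den, den, hx, hy]
    rw [Finset.prod_Icc_succ_top (by omega : 1 ≤ k + 1)]
    rw [show k + 1 - 1 = k from rfl, hx]
    calc (∏ i ∈ Finset.Icc 1 k, (r i : ℝ) * (den a r (i - 1) (rad a r n 1)) ^ (r i - 1)) *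
          ((r (k + 1) : ℝ) * rad a r n (k + 1) ^ (r (k + 1) - 1)) *
          (rad a r (n + 1) 1 - rad a r n 1)
        = (r (k + 1) : ℝ) * rad a r n (k + 1) ^ (r (k + 1) - 1) *
          ((∏ i ∈ Finset.Icc 1 k, (r i : ℝ) * (den a r (i - 1) (rad a r n 1)) ^ (r i - 1)) *
           (rad a r (n + 1) 1 - rad a r n 1)) := by ring
      _ ≤ (r (k + 1) : ℝ) * rad a r n (k + 1) ^ (r (k + 1) - 1) *
          (rad a r (n + 1) (k + 1) - rad a r n (k + 1)) := by
          have hrpos : (0:ℝ) < (r (k + 1) : ℝ) := by exact_mod_cast hr (k + 1)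
          apply mul_le_mul_of_nonneg_left _ (le_of_lt (mul_pos hrpos (pow_pos hxpos _)))
          rw [← hx, ← hy]; exact ih'
      _ ≤ rad a r (n + 1) (k + 1) ^ r (k + 1) - rad a r n (k + 1) ^ r (k + 1) := hpow
      _ = rad a r (n + 1) (k + 1) ^ r (k + 1) - a (k + 1) -
          (rad a r n (k + 1) ^ r (k + 1) - a (k + 1)) := by ring

theorem sufficient_condition_convergence (a : ℕ → ℝ) (r : ℕ → ℕ)
    (ha : ∀ n, 1 ≤ n → 0 < a n) (hr : ∀ n, 1 ≤ r n)
    (hS : Summable (fun n =>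
      (a (n + 1)) ^ ((r (n + 1) : ℝ)⁻¹) /
        ∏ i ∈ Finset.Icc 1 n,
          (r i : ℝ) * (den a r (i - 1) (rad a r n 1)) ^ (r i - 1))) :
    ∃ L : ℝ, Filter.Tendsto (fun n => rad a r n 1) Filter.atTop (nhds L) := by
  set v : ℕ → ℝ := fun n => rad a r n 1 with hv
  have hP : ∀ n, 0 < ∏ i ∈ Finset.Icc 1 n,
      (r i : ℝ) * (den a r (i - 1) (rad a r n 1)) ^ (r i - 1) := by
    intro n
    apply Finset.prod_pos
    intro i hi
    rw [Finset.mem_Icc] at hi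
    have h1 : (0:ℝ) < (r i : ℝ) := by exact_mod_cast hr i
    have h2 : den a r (i - 1) (rad a r n 1) = rad a r n i := by
      rw [den_eq_rad a r ha hr n (i - 1) (by omega)]
      congr 1; omega
    rw [h2]
    exact mul_pos h1 (pow_pos (rad_pos a r ha n i hi.1 hi.2) _)
  have hbound : ∀ n, v (n + 1) - v n ≤
      (a (n + 1)) ^ ((r (n + 1) : ℝ)⁻¹) /
        ∏ i ∈ Finset.Icc 1 n,
          (r i : ℝ) * (den a r (i - 1) (rad a r n 1)) ^ (r i - 1) := by
    intro n
    have hk := key a r ha hr n n le_rfl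
    have hdn : den a r n (rad a r n 1) = rad a r n (n + 1) := den_eq_rad a r ha hr n n le_rfl
    have hdn1 : den a r n (rad a r (n + 1) 1) = rad a r (n + 1) (n + 1) :=
      den_eq_rad a r ha hr (n + 1) n (by omega)
    have hz : rad a r n (n + 1) = 0 := by rw [rad, dif_neg (by omega)]
    have hw : rad a r (n + 1) (n + 1) = (a (n + 1)) ^ ((r (n + 1) : ℝ)⁻¹) := by
      rw [rad, dif_pos (le_refl (n + 1)),
        show rad a r (n + 1) (n + 1 + 1) = 0 by rw [rad, dif_neg (by omega)], add_zero]
    rw [hdn, hdn1, hz, hw, sub_zero] at hk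
    rw [le_div_iff₀ (hP n)]
    linarith [hk]
  have hmono : ∀ n, v n ≤ v (n + 1) := fun n => rad_mono a r ha n 1 le_rfl
  have hsum : Summable (fun n => v (n + 1) - v n) :=
    Summable.of_nonneg_of_le (fun n => by linarith [hmono n]) hbound hS
  obtain ⟨M, hM⟩ := hsum
  refine ⟨M + v 0, ?_⟩
  have h1 : Filter.Tendsto (fun n => ∑ i ∈ Finset.range n, (v (i + 1) - v i))
      Filter.atTop (nhds M) := hM.tendsto_sum_nat
  have h2 : ∀ n, ∑ i ∈ Finset.range n, (v (i + 1) - v i) = v n - v 0 :=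
    fun n => Finset.sum_range_sub v n
  have h3 : Filter.Tendsto (fun n => v n - v 0 + v 0) Filter.atTop (nhds (M + v 0)) := by
    apply Filter.Tendsto.add_const
    simpa only [h2] using h1
  simpa using h3
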